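/- Let p_{n,ij}, q_{n,ij} ∈ (0,1) with sup_{i<j} p_{n,ij} < C/(1+C) for some C > 0, and suppose Σ_{i<j} (p_{n,ij} - q_{n,ij})^2 / p_{n,ij} = O(1) as n → ∞. With k_{n,ij} = log(q_{n,ij}(1-p_{n,ij})/(p_{n,ij}(1-q_{n,ij}))), we have Σ_{i<j} k_{n,ij}^2 · q_{n,ij}(1-q_{n,ij}) ≤ 4(1+C)·Σ_{i<j} (p_{n,ij} - q_{n,ij})^2/p_{n,ij} = O(1). -/

import Mathlib

open Finset Filter Asymptotics

lemma two_log_le {s : ℝ} (hs : 1 ≤ s) : 2 * Real.log s ≤ s - s⁻¹ := by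
  rcases eq_or_lt_of_le hs with h | h
  · simp [← h]
  · have hls : 0 < Real.log s := Real.log_pos h
    have h2 := (Real.self_lt_sinh_iff.mpr hls).le
    have hspos : (0:ℝ) < s := by linarith
    rw [Real.sinh_eq, Real.exp_log hspos, Real.exp_neg, Real.exp_log hspos] at h2
    linarith

lemma log_sub_le {x y : ℝ} (hx : 0 < x) (hxy : x ≤ y) :
    Real.log y - Real.log x ≤ (y - x) / Real.sqrt (x * y) := by
  have hy : 0 < y := hx.trans_le hxy
  have hsx : 0 < Real.sqrt x := Real.sqrt_pos.mpr hx
  have hsy : 0 < Real.sqrt y := Real.sqrt_pos.mpr hy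
  set s := Real.sqrt (y / x) with hs
  have hs1 : 1 ≤ s := Real.one_le_sqrt.mpr ((one_le_div hx).mpr hxy)
  have hkey := two_log_le hs1
  have hlog : Real.log s = (Real.log y - Real.log x) / 2 := by
    rw [hs, Real.log_sqrt (by positivity), Real.log_div (ne_of_gt hy) (ne_of_gt hx)]
  have hsq : s = Real.sqrt y / Real.sqrt x := Real.sqrt_div hy.le x
  have hxy2 : Real.sqrt (x*y) = Real.sqrt x * Real.sqrt y := Real.sqrt_mul hx.le y
  have hx2 : Real.sqrt x ^ 2 = x := Real.sq_sqrt hx.le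
  have hy2 : Real.sqrt y ^ 2 = y := Real.sq_sqrt hy.le
  have heq : s - s⁻¹ = (y - x) / Real.sqrt (x*y) := by
    rw [hsq, hxy2, inv_div, div_sub_div _ _ (ne_of_gt hsx) (ne_of_gt hsy),
      Real.mul_self_sqrt hy.le, Real.mul_self_sqrt hx.le]
  rw [hlog] at hkey
  linarith [hkey, heq.symm.le]

lemma log_sub_sq_le {x y : ℝ} (hx : 0 < x) (hy : 0 < y) :
    (Real.log y - Real.log x)^2 ≤ (y - x)^2 / (x * y) := by
  wlog hxy : x ≤ y with H
  · have h := H hy hx (le_of_not_ge hxy)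
    have e1 : (Real.log x - Real.log y)^2 = (Real.log y - Real.log x)^2 := by ring
    have e2 : (x - y)^2 = (y - x)^2 := by ring
    rw [e1, e2, mul_comm] at h
    exact h
  · have h := log_sub_le hx hxy
    have hnn : 0 ≤ Real.log y - Real.log x := by
      have := Real.log_le_log hx hxy
      linarith
    have hsq : (Real.log y - Real.log x)^2 ≤ ((y - x) / Real.sqrt (x*y))^2 :=
      pow_le_pow_left₀ hnn h 2
    rwa [div_pow, Real.sq_sqrt (by positivity)] at hsq

-- pointwise key bound
set_option maxHeartbeats 1000000 in
lemma pointwise_bound {C p q : ℝ} (hC : 0 < C) (hp : p ∈ Set.Ioo (0:ℝ) 1)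
    (hq : q ∈ Set.Ioo (0:ℝ) 1) (hpc : p < C / (1 + C)) :
    (Real.log ((q * (1 - p)) / (p * (1 - q))))^2 * (q * (1 - q))
      ≤ 4 * (1 + C) * ((p - q)^2 / p) := by
  obtain ⟨hp0, hp1⟩ := hp
  obtain ⟨hq0, hq1⟩ := hq
  have h1p : 0 < 1 - p := by linarith
  have h1q : 0 < 1 - q := by linarith
  set a := Real.log q - Real.log p with ha
  set b := Real.log (1 - p) - Real.log (1 - q) with hb
  have hk : Real.log ((q * (1 - p)) / (p * (1 - q))) = a + b := by
    rw [Real.log_div (by positivity) (by positivity),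
        Real.log_mul (ne_of_gt hq0) (ne_of_gt h1p),
        Real.log_mul (ne_of_gt hp0) (ne_of_gt h1q)]
    ring
  have ha2 : a^2 ≤ (q - p)^2 / (p * q) := log_sub_sq_le hp0 hq0
  have hb2 : b^2 ≤ ((1-p) - (1-q))^2 / ((1 - q) * (1 - p)) := log_sub_sq_le h1q h1p
  have ha2' : a^2 * (p * q) ≤ (q - p)^2 := (le_div_iff₀ (by positivity)).mp ha2
  have hb2' : b^2 * ((1 - q) * (1 - p)) ≤ (q - p)^2 := by
    have h := (le_div_iff₀ (by positivity)).mp hb2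
    calc b^2 * ((1-q)*(1-p)) ≤ ((1-p)-(1-q))^2 := h
      _ = (q - p)^2 := by ring
  have hCp : 1 ≤ (1 + C) * (1 - p) := by
    have h := (lt_div_iff₀ (by positivity : (0:ℝ) < 1 + C)).mp hpc
    nlinarith
  -- goal: (a+b)^2 * (q*(1-q)) ≤ 4*(1+C)*((p-q)^2/p)
  rw [hk, mul_comm (4*(1+C)) _, div_mul_eq_mul_div, le_div_iff₀ hp0]
  -- now: (a+b)^2 * (q*(1-q)) * p ≤ (p-q)^2 * (4*(1+C))
  have key1 : a^2 * (q * (1-q) * p) ≤ (q-p)^2 := by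
    nlinarith [ha2', sq_nonneg a, mul_nonneg (sq_nonneg a) (mul_pos hp0 hq0).le]
  have key2 : b^2 * (q * (1-q) * p) ≤ (1+C) * (q-p)^2 := by
    have s1 : b^2 * (q * (1-q) * p) ≤ b^2 * (1-q) := by
      have : q * p ≤ 1 := by nlinarith
      nlinarith [sq_nonneg b, mul_nonneg (sq_nonneg b) h1q.le]
    have s2 : b^2 * (1-q) ≤ b^2 * ((1-q) * ((1+C)*(1-p))) := by
      nlinarith [mul_nonneg (sq_nonneg b) h1q.le]
    have s3 : b^2 * ((1-q) * ((1+C)*(1-p))) = (1+C) * (b^2 * ((1-q)*(1-p))) := by ring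
    have s4 : (1+C) * (b^2 * ((1-q)*(1-p))) ≤ (1+C) * (q-p)^2 :=
      mul_le_mul_of_nonneg_left hb2' (by linarith)
    linarith
  nlinarith [key1, key2, mul_nonneg (sq_nonneg (a-b)) (by positivity : (0:ℝ) ≤ q * (1-q) * p)]

theorem janson_condition_bounds_variance
    (p q : (n : ℕ) → ℕ × ℕ → ℝ) (C : ℝ) (hC : 0 < C)
    (hp : ∀ n, ∀ e ∈ (range n ×ˢ range n).filter (fun e => e.1 < e.2),
      p n e ∈ Set.Ioo (0:ℝ) 1)
    (hq : ∀ n, ∀ e ∈ (range n ×ˢ range n).filter (fun e => e.1 < e.2),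
      q n e ∈ Set.Ioo (0:ℝ) 1)
    (hsup : ∀ n, ∀ e ∈ (range n ×ˢ range n).filter (fun e => e.1 < e.2),
      p n e < C / (1 + C))
    (hO : (fun n => ∑ e ∈ (range n ×ˢ range n).filter (fun e => e.1 < e.2),
        (p n e - q n e) ^ 2 / p n e) =O[atTop] fun _ => (1:ℝ)) :
    (∀ n, ∑ e ∈ (range n ×ˢ range n).filter (fun e => e.1 < e.2),
        (Real.log ((q n e * (1 - p n e)) / (p n e * (1 - q n e)))) ^ 2
          * (q n e * (1 - q n e))
      ≤ 4 * (1 + C) * ∑ e ∈ (range n ×ˢ range n).filter (fun e => e.1 < e.2),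
          (p n e - q n e) ^ 2 / p n e) ∧
    (fun n => ∑ e ∈ (range n ×ˢ range n).filter (fun e => e.1 < e.2),
        (Real.log ((q n e * (1 - p n e)) / (p n e * (1 - q n e)))) ^ 2
          * (q n e * (1 - q n e))) =O[atTop] fun _ => (1:ℝ) := by
  have hbound : ∀ n, ∑ e ∈ (range n ×ˢ range n).filter (fun e => e.1 < e.2),
        (Real.log ((q n e * (1 - p n e)) / (p n e * (1 - q n e)))) ^ 2
          * (q n e * (1 - q n e))
      ≤ 4 * (1 + C) * ∑ e ∈ (range n ×ˢ range n).filter (fun e => e.1 < e.2),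
          (p n e - q n e) ^ 2 / p n e := by
    intro n
    rw [Finset.mul_sum]
    exact Finset.sum_le_sum fun e he =>
      pointwise_bound hC (hp n e he) (hq n e he) (hsup n e he)
  refine ⟨hbound, ?_⟩
  have hf : (fun n => ∑ e ∈ (range n ×ˢ range n).filter (fun e => e.1 < e.2),
        (Real.log ((q n e * (1 - p n e)) / (p n e * (1 - q n e)))) ^ 2
          * (q n e * (1 - q n e)))
      =O[atTop] (fun n => ∑ e ∈ (range n ×ˢ range n).filter (fun e => e.1 < e.2),
          (p n e - q n e) ^ 2 / p n e) := by
    rw [isBigO_iff]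
    refine ⟨4 * (1 + C), Filter.Eventually.of_forall fun n => ?_⟩
    have hnn : 0 ≤ ∑ e ∈ (range n ×ˢ range n).filter (fun e => e.1 < e.2),
        (Real.log ((q n e * (1 - p n e)) / (p n e * (1 - q n e)))) ^ 2
          * (q n e * (1 - q n e)) := by
      refine Finset.sum_nonneg fun e he => ?_
      have hqe := hq n e he
      have h1 : (0:ℝ) < q n e := hqe.1
      have h2 : (0:ℝ) ≤ 1 - q n e := by linarith [hqe.2]
      exact mul_nonneg (sq_nonneg _) (mul_nonneg h1.le h2)
    have hnn2 : 0 ≤ ∑ e ∈ (range n ×ˢ range n).filter (fun e => e.1 < e.2),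
        (p n e - q n e) ^ 2 / p n e := by
      refine Finset.sum_nonneg fun e he => ?_
      have hpe := (hp n e he).1
      positivity
    rw [Real.norm_eq_abs, Real.norm_eq_abs, abs_of_nonneg hnn, abs_of_nonneg hnn2]
    exact hbound n
  exact hf.trans hO
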